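/- A subspace Y of codimension 1 in an Archimedean vector lattice X is full (i.e., x, y ∈ Y with x ≤ y implies [x,y] ⊆ Y) if and only if Y is the kernel of a positive or negative linear functional. -/

import Mathlib

/-- Relative uniform convergence closedness: `A` is uniformly closed if it contains the
limit of every sequence in `A` that converges relatively uniformly (with regulator `e`). -/
def RUClosed {X : Type*} [AddCommGroup X] [Lattice X] [Module ℝ X] (A : Set X) : Prop :=
  ∀ (x : X) (a : ℕ → X) (e : X), 0 ≤ e → (∀ n, a n ∈ A) →
    (∀ ε : ℝ, 0 < ε → ∃ N, ∀ n ≥ N, |a n - x| ≤ ε • e) → x ∈ A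

/-- A linear functional is order bounded if it is bounded on every order interval. -/
def OrderBoundedFunc {X : Type*} [AddCommGroup X] [Lattice X] [Module ℝ X]
    (φ : X →ₗ[ℝ] ℝ) : Prop :=
  ∀ a b : X, ∃ M : ℝ, ∀ x : X, a ≤ x → x ≤ b → |φ x| ≤ M

/-- A submodule is a (vector) sublattice if it is closed under finite suprema. -/
def IsVectorSublattice {X : Type*} [AddCommGroup X] [Lattice X] [Module ℝ X]
    (Y : Submodule ℝ X) : Prop :=
  ∀ x ∈ Y, ∀ y ∈ Y, x ⊔ y ∈ Y

/-- A submodule is an order ideal if it is solid. -/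
def IsOrderIdeal {X : Type*} [AddCommGroup X] [Lattice X] [Module ℝ X]
    (J : Submodule ℝ X) : Prop :=
  ∀ x y : X, |x| ≤ |y| → y ∈ J → x ∈ J

/-- The Archimedean property for a vector lattice. -/
def ArchimedeanVL (X : Type*) [AddCommGroup X] [Lattice X] [Module ℝ X] : Prop :=
  ∀ x y : X, 0 ≤ x → (∀ n : ℕ, n • x ≤ y) → x = 0

theorem stmt13 {X : Type*} [AddCommGroup X] [Lattice X]
    [CovariantClass X X (· + ·) (· ≤ ·)] [Module ℝ X] [PosSMulMono ℝ X] (hArch : ArchimedeanVL X) (Y : Submodule ℝ X)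
    (hcodim : Module.finrank ℝ (X ⧸ Y) = 1) :
    (∀ x y z : X, x ∈ Y → y ∈ Y → x ≤ z → z ≤ y → z ∈ Y) ↔
      ∃ φ : X →ₗ[ℝ] ℝ,
        ((∀ x : X, 0 ≤ x → 0 ≤ φ x) ∨ (∀ x : X, 0 ≤ x → φ x ≤ 0)) ∧
        Y = LinearMap.ker φ := by
  constructor
  · intro hfull
    -- build a linear functional with kernel Y from the codimension-1 hypothesis
    obtain ⟨b⟩ := (finrank_eq_one_iff (K := ℝ) (V := X ⧸ Y) (Fin 1)).mp hcodim
    set ψ : (X ⧸ Y) →ₗ[ℝ] ℝ := b.coord 0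
    have hψinj : ∀ w : X ⧸ Y, ψ w = 0 → w = 0 := by
      intro w hw
      have := b.sum_repr w
      simp [Fin.sum_univ_one] at this
      rw [← this]
      have : b.repr w 0 = ψ w := rfl
      rw [this, hw, zero_smul]
    set φ : X →ₗ[ℝ] ℝ := ψ.comp Y.mkQ with hφ
    have hker : Y = LinearMap.ker φ := by
      ext x
      constructor
      · intro hx
        simp [hφ, LinearMap.mem_ker, (Submodule.Quotient.mk_eq_zero Y).mpr hx]
      · intro hx
        have : Y.mkQ x = 0 := hψinj _ hx
        exact (Submodule.Quotient.mk_eq_zero Y).mp this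
    refine ⟨φ, ?_, hker⟩
    by_contra hcon
    push_neg at hcon
    obtain ⟨⟨a, ha0, haφ⟩, ⟨c, hc0, hcφ⟩⟩ := hcon
    -- φ a < 0, φ c > 0, a ≥ 0, c ≥ 0
    set t : ℝ := φ c / (-φ a) with ht
    have htpos : 0 < t := div_pos hcφ (by linarith)
    have hw : φ (c + t • a) = 0 := by
      rw [map_add, map_smul, ht]
      have : -φ a ≠ 0 := by linarith
      rw [smul_eq_mul, div_neg, neg_mul, div_mul_cancel₀ _ (neg_ne_zero.mp this)]; ring
    have hwY : c + t • a ∈ Y := hker ▸ hw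
    have hta : (0 : X) ≤ t • a := by
      calc (0 : X) = t • (0 : X) := (smul_zero t).symm
      _ ≤ t • a := smul_le_smul_of_nonneg_left ha0 htpos.le
    have hcw : c ≤ c + t • a := le_add_of_nonneg_right hta
    have : c ∈ Y := hfull 0 (c + t • a) c Y.zero_mem hwY hc0 hcw
    rw [hker, LinearMap.mem_ker] at this
    linarith
  · rintro ⟨φ, hpos | hneg, hker⟩ x y z hx hy hxz hzy <;> subst hker
    · have h1 : φ x ≤ φ z := by
        have := hpos (z - x) (sub_nonneg.mpr hxz); rw [map_sub] at this; linarith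
      have h2 : φ z ≤ φ y := by
        have := hpos (y - z) (sub_nonneg.mpr hzy); rw [map_sub] at this; linarith
      simp only [LinearMap.mem_ker] at hx hy ⊢
      linarith
    · have h1 : φ z ≤ φ x := by
        have := hneg (z - x) (sub_nonneg.mpr hxz); rw [map_sub] at this; linarith
      have h2 : φ y ≤ φ z := by
        have := hneg (y - z) (sub_nonneg.mpr hzy); rw [map_sub] at this; linarith
      simp only [LinearMap.mem_ker] at hx hy ⊢
      linarith
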